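/- For every polynomial knot κ in the space V^n_{d₁,...,dₙ} of knots of the form xᵢ(t) = t^{dᵢ} + aⁱ_{dᵢ-1}t^{dᵢ-1} + ··· + aⁱ₁t, and every u > 0, the map κ_u(t) whose i-th component is t^{dᵢ} + aⁱ_{dᵢ-1}·u·t^{dᵢ-1} + ··· + aⁱ₁·u^{dᵢ-1}·t satisfies κ_u(t) = (u^{d₁}x₁(t/u), ..., u^{dₙ}xₙ(t/u)); consequently κ_u is injective with nowhere-vanishing derivative whenever κ is, and κ₀(t) = (t^{d₁},...,t^{dₙ}). -/

import Mathlib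

theorem stmt_18 (n : ℕ) (d : Fin n → ℕ) (hd : ∀ i, 1 ≤ d i)
    (a : Fin n → ℕ → ℝ)
    (ha0 : ∀ i, a i 0 = 0) (halead : ∀ i, a i (d i) = 1) :
    let x : Fin n → ℝ → ℝ := fun i t => ∑ j ∈ Finset.range (d i + 1), a i j * t ^ j
    let κ : ℝ → ℝ → (Fin n → ℝ) :=
      fun u t => fun i => ∑ j ∈ Finset.range (d i + 1), a i j * u ^ (d i - j) * t ^ j
    (∀ u : ℝ, 0 < u → ∀ t i, κ u t i = u ^ d i * x i (t / u)) ∧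
    (∀ t i, κ 0 t i = t ^ d i) ∧
    (∀ u : ℝ, 0 < u →
      (Function.Injective (fun t => fun i => x i t) → Function.Injective (κ u)) ∧
      ((∀ t, ∃ i, deriv (x i) t ≠ 0) →
        ∀ t, ∃ i, deriv (fun t => κ u t i) t ≠ 0)) := by
  intro x κ
  have key : ∀ u : ℝ, 0 < u → ∀ t i, κ u t i = u ^ d i * x i (t / u) := by
    intro u hu t i
    simp only [κ, x, Finset.mul_sum]
    apply Finset.sum_congr rfl
    intro j hj
    have hj' : j ≤ d i := Nat.lt_succ_iff.mp (Finset.mem_range.mp hj)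
    have hu0 : u ≠ 0 := ne_of_gt hu
    rw [pow_sub₀ u hu0 hj', div_pow]
    field_simp
  refine ⟨key, ?_, ?_⟩
  · intro t i
    simp only [κ]
    rw [Finset.sum_range_succ]
    have h1 : ∀ j ∈ Finset.range (d i), a i j * (0:ℝ) ^ (d i - j) * t ^ j = 0 := by
      intro j hj
      have : d i - j ≠ 0 := Nat.sub_ne_zero_of_lt (Finset.mem_range.mp hj)
      rw [zero_pow this]; ring
    rw [Finset.sum_eq_zero h1, halead i, Nat.sub_self]
    simp
  · intro u hu
    have hu0 : u ≠ 0 := ne_of_gt hu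
    have hxdiff : ∀ i, Differentiable ℝ (x i) := by
      intro i
      apply Differentiable.fun_sum
      intro j _
      exact (differentiable_pow j).const_mul _
    constructor
    · intro hinj t₁ t₂ h
      have h2 : ∀ i, x i (t₁ / u) = x i (t₂ / u) := by
        intro i
        have := congrFun h i
        rw [key u hu t₁ i, key u hu t₂ i] at this
        exact mul_left_cancel₀ (pow_ne_zero _ hu0) this
      have := hinj (funext h2)
      field_simp at this
      exact this
    · intro hder t
      obtain ⟨i, hi⟩ := hder (t / u)
      refine ⟨i, ?_⟩
      have heq : (fun t => κ u t i) = fun t => u ^ d i * x i (t * u⁻¹) := by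
        funext s
        rw [key u hu s i, div_eq_mul_inv]
      rw [heq]
      have hcomp : (fun t : ℝ => x i (t * u⁻¹)) = (x i) ∘ (fun t => t * u⁻¹) := rfl
      rw [deriv_const_mul _ (by
        rw [hcomp]
        exact ((hxdiff i).comp (differentiable_id.mul_const _)).differentiableAt)]
      rw [hcomp, deriv_comp t (hxdiff i _)
        (by exact differentiableAt_fun_id.mul_const _)]
      simp only [deriv_mul_const_field, deriv_id'', one_mul]
      rw [← div_eq_mul_inv]
      exact mul_ne_zero (pow_ne_zero _ hu0)
        (mul_ne_zero hi (inv_ne_zero hu0))
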